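/- Let n ≥ 2, let X ⊆ ℕ be a finite set and let P : [X]^2 → n be a colouring. For any x ∈ X with x ≠ min X and any colour c ∈ col(σ_x), one has min ho(σ_x, c) ≤ σ_x^-(|σ_x^-| − 1), i.e. the minimum of ho(σ_x, c) is at most the last element of σ_x^-. -/
import Mathlib


/-- `σ` is the hereditarily minimal prehomogeneous (h.m.p.h.) sequence for `x` w.r.t. the
colouring `P` on `X`: `σ(0) = min X`,
`σ(i+1) = min {y ∈ X : y > σ(i) ∧ ∀ j ≤ i, P(σ(j), x) = P(σ(j), y)}`,
and the construction stops once `σ(i) = x`. -/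
def IsHMPH {n : ℕ} (X : Finset ℕ) (P : ℕ → ℕ → Fin n) (x : ℕ) (σ : List ℕ) : Prop :=
  σ ≠ [] ∧
  (σ.getD 0 0 ∈ X ∧ ∀ z ∈ X, σ.getD 0 0 ≤ z) ∧
  σ.getLast? = some x ∧
  (∀ i, i + 1 < σ.length → σ.getD i 0 ≠ x) ∧
  (∀ i, i + 1 < σ.length →
    σ.getD (i + 1) 0 ∈ X ∧ σ.getD i 0 < σ.getD (i + 1) 0 ∧
    (∀ j ≤ i, P (σ.getD j 0) x = P (σ.getD j 0) (σ.getD (i + 1) 0)) ∧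
    ∀ y ∈ X, σ.getD i 0 < y →
      (∀ j ≤ i, P (σ.getD j 0) x = P (σ.getD j 0) y) → σ.getD (i + 1) 0 ≤ y)

/-- For a colour `c < n`, `ho(σ_x, c) = {σ_x(i) : i < |σ_x| − 1 ∧ P(σ_x(i), x) = c}`.
(For an initial segment `σ_y` of an h.m.p.h. sequence `σ_x`, the colours
`P(σ_y(i), y)` and `P(σ_y(i), x)` agree for `i < |σ_y| - 1`, so we may use `x`
throughout.) -/
def hmphHo {n : ℕ} (P : ℕ → ℕ → Fin n) (x : ℕ) (σ : List ℕ) (c : Fin n) : Set ℕ :=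
  {z | ∃ i, i + 1 < σ.length ∧ σ.getD i 0 = z ∧ P z x = c}

/-- `col(σ_x) = {c < n : ho(σ_x, c) ≠ ∅}`. -/
def hmphCol {n : ℕ} (P : ℕ → ℕ → Fin n) (x : ℕ) (σ : List ℕ) : Set (Fin n) :=
  {c | (hmphHo P x σ c).Nonempty}

/-- Let `n ≥ 2`, `X ⊆ ℕ` finite, `P : [X]² → n` a colouring.  For any `x ∈ X` with
`x ≠ min X` and any colour `c ∈ col(σ_x)`, one has
`min ho(σ_x, c) ≤ σ_x⁻(|σ_x⁻| − 1)`, where `σ_x⁻` (here `τ`) is the longest initial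
segment of `σ_x` with `col(τ) ⊊ col(σ_x)`. -/
theorem min_ho_le_last_of_hmph_minus (n : ℕ) (hn : 2 ≤ n) (X : Finset ℕ)
    (P : ℕ → ℕ → Fin n) (x : ℕ) (hx : x ∈ X) (hxmin : ∃ z ∈ X, z < x)
    (σ : List ℕ) (hσ : IsHMPH X P x σ)
    (c : Fin n) (hc : c ∈ hmphCol P x σ)
    (τ : List ℕ) (hτpre : τ <+: σ) (hτne : τ ≠ σ)
    (hτcol : hmphCol P x τ ⊂ hmphCol P x σ)
    (hτmax : ∀ τ' : List ℕ, τ' <+: σ → τ' ≠ σ →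
      hmphCol P x τ' ⊂ hmphCol P x σ → τ'.length ≤ τ.length) :
    sInf (hmphHo P x σ c) ≤ τ.getD (τ.length - 1) 0 := by
  obtain ⟨hne, ⟨h0X, h0min⟩, hlast, hnotx, hstep⟩ := hσ
  have hσlen1 : 1 ≤ σ.length := List.length_pos_iff.mpr hne
  have hxlast : σ.getD (σ.length - 1) 0 = x := by
    rw [List.getLast?_eq_getElem?] at hlast
    have hlt : σ.length - 1 < σ.length := by omega
    rw [List.getElem?_eq_getElem hlt] at hlast
    rw [List.getD_eq_getElem _ _ hlt]
    exact Option.some_injective _ hlast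
  have hσlen2 : 2 ≤ σ.length := by
    by_contra h
    have h1 : σ.length = 1 := by omega
    obtain ⟨z, hz, hzx⟩ := hxmin
    have h2 := h0min z hz
    have h3 : σ.getD 0 0 = x := by rw [← hxlast, h1]
    omega
  have hmono : ∀ a b, b < σ.length → a ≤ b → σ.getD a 0 ≤ σ.getD b 0 := by
    intro a b
    induction b with
    | zero => intro _ h; simp [Nat.le_zero.mp h]
    | succ k ih =>
      intro hb hab
      rcases Nat.lt_or_ge a (k+1) with h | h
      · have h1 := (hstep k hb).2.1
        have h2 := ih (by omega) (by omega)
        omega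
      · have : a = k+1 := by omega
        simp [this]
  have hLlt : τ.length < σ.length := by
    rcases Nat.lt_or_ge τ.length σ.length with h | h
    · exact h
    · exact absurd (List.IsPrefix.eq_of_length hτpre
        (le_antisymm hτpre.length_le h)) hτne
  set L := τ.length with hLdef
  have hτσ : ∀ i, i < L → τ.getD i 0 = σ.getD i 0 := by
    intro i hi
    rw [List.getD_eq_getElem _ _ hi, List.getD_eq_getElem _ _ (by omega : i < σ.length)]
    exact hτpre.getElem hi
  have hL1 : 1 ≤ L := by
    have hres := hτmax (σ.take 1) (List.take_prefix _ _)
      (by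
        intro h
        have := congrArg List.length h
        simp at this
        omega)
      (by
        constructor
        · intro c' hc'
          obtain ⟨z, i, hi, _, _⟩ := hc'
          rw [List.length_take] at hi
          omega
        · intro hsub
          obtain ⟨z, i, hi, _, _⟩ := hsub hc
          rw [List.length_take] at hi
          omega)
    rw [List.length_take] at hres
    omega
  have key : ∃ i, i < L ∧ P (σ.getD i 0) x = c := by
    by_contra hno
    push_neg at hno
    rcases eq_or_lt_of_le (show L + 1 ≤ σ.length by omega) with heq | hlt
    · obtain ⟨z, i, hi, hzi, hPc⟩ := hc
      exact hno i (by omega) (by rw [hzi]; exact hPc)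
    · have htlen : (σ.take (L+1)).length = L + 1 := by
        rw [List.length_take]; omega
      have htget : ∀ i, i < L + 1 → (σ.take (L+1)).getD i 0 = σ.getD i 0 := by
        intro i hi
        rw [List.getD_eq_getElem _ _ (by omega : i < (σ.take (L+1)).length),
          List.getD_eq_getElem _ _ (by omega : i < σ.length)]
        exact (List.take_prefix (L+1) σ).getElem _
      have hmax := hτmax (σ.take (L+1)) (List.take_prefix _ _)
        (by
          intro h
          have := congrArg List.length h
          rw [htlen] at this
          omega)
        (by
          constructor
          · intro c' hc'
            obtain ⟨z, i, hi, hzi, hPc⟩ := hc'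
            rw [htlen] at hi
            refine ⟨z, i, by omega, ?_, hPc⟩
            rw [← htget i (by omega)]
            exact hzi
          · intro hsub
            obtain ⟨z, i, hi, hzi, hPc⟩ := hsub hc
            rw [htlen] at hi
            apply hno i (by omega)
            rw [htget i (by omega)] at hzi
            rw [hzi]
            exact hPc)
      omega
  obtain ⟨i, hiL, hPc⟩ := key
  have hmem : σ.getD i 0 ∈ hmphHo P x σ c := ⟨i, by omega, rfl, hPc⟩
  have h1 := Nat.sInf_le hmem
  have h2 := hmono i (L-1) (by omega) (by omega)
  have h3 : τ.getD (L-1) 0 = σ.getD (L-1) 0 := hτσ _ (by omega)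
  omega
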